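/- Suppose A ∈ ℝ^{n×n}, H(A) = (A + Aᵀ)/2 is negative semidefinite, and rank H(A) = rank A. Then A and H(A) have the same null space. -/

import Mathlib

open Matrix

theorem stmt4 (n : ℕ) (A : Matrix (Fin n) (Fin n) ℝ)
    (H : Matrix (Fin n) (Fin n) ℝ) (hH : H = (1/2 : ℝ) • (A + Aᵀ))
    (hnsd : ∀ y : Fin n → ℝ, y ⬝ᵥ (H *ᵥ y) ≤ 0)
    (hrank : H.rank = A.rank) :
    ∀ x : Fin n → ℝ, A *ᵥ x = 0 ↔ H *ᵥ x = 0 := by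
  have hsymm : Hᵀ = H := by
    subst hH
    simp [Matrix.transpose_smul, Matrix.transpose_add, add_comm]
  have hHerm : H.IsHermitian := by
    rw [Matrix.IsHermitian, Matrix.conjTranspose_eq_transpose_of_trivial, hsymm]
  have hPSD : (-H).PosSemidef := by
    refine Matrix.PosSemidef.of_dotProduct_mulVec_nonneg hHerm.neg (fun x => ?_)
    have := hnsd x
    simp only [Matrix.neg_mulVec, dotProduct_neg, star_trivial]
    linarith
  have hker_le : LinearMap.ker A.mulVecLin ≤ LinearMap.ker H.mulVecLin := by
    intro x hx
    simp only [LinearMap.mem_ker, Matrix.mulVecLin_apply] at hx ⊢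
    have hAt : x ⬝ᵥ Aᵀ *ᵥ x = 0 := by
      rw [Matrix.dotProduct_mulVec, Matrix.vecMul_transpose, hx]
      simp
    have hxHx : x ⬝ᵥ H *ᵥ x = 0 := by
      subst hH
      simp [Matrix.add_mulVec, Matrix.smul_mulVec, dotProduct_smul,
        dotProduct_add, hx, hAt]
    have : (-H) *ᵥ x = 0 := by
      rw [← hPSD.dotProduct_mulVec_zero_iff x]
      simp [Matrix.neg_mulVec, hxHx]
    have := congrArg Neg.neg this
    simpa [Matrix.neg_mulVec] using this
  have hfr : Module.finrank ℝ (LinearMap.ker A.mulVecLin)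
      = Module.finrank ℝ (LinearMap.ker H.mulVecLin) := by
    have h1 := LinearMap.finrank_range_add_finrank_ker A.mulVecLin
    have h2 := LinearMap.finrank_range_add_finrank_ker H.mulVecLin
    have hr : Module.finrank ℝ (LinearMap.range H.mulVecLin)
        = Module.finrank ℝ (LinearMap.range A.mulVecLin) := hrank
    omega
  have hker_eq : LinearMap.ker A.mulVecLin = LinearMap.ker H.mulVecLin :=
    Submodule.eq_of_le_of_finrank_eq hker_le hfr
  intro x
  constructor
  · intro h
    have : x ∈ LinearMap.ker H.mulVecLin := hker_eq ▸ (by simpa using h)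
    simpa using this
  · intro h
    have : x ∈ LinearMap.ker A.mulVecLin := hker_eq ▸ (by simpa using h : x ∈ LinearMap.ker H.mulVecLin)
    simpa using this
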